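/- Let T be a bounded operator on a complex Hilbert space H, decomposed as T = [[A,B],[0,0]] with respect to H = closure(R(T)) ⊕ N(T*). Then T and T* coincide on M := closure(R(T)) ∩ closure(R(T*)) if and only if A and A* coincide on M and M ⊆ N(B*). -/

import Mathlib

open ContinuousLinearMap

variable {H : Type*} [NormedAddCommGroup H] [InnerProductSpace ℂ H] [CompleteSpace H]

noncomputable def opB (T : H →L[ℂ] H) (K N : Submodule ℂ H) [CompleteSpace K] :
    N →L[ℂ] K :=
  (Submodule.orthogonalProjectionOnto K) ∘L (T ∘L N.subtypeL)

lemma ker_adj_eq (T : H →L[ℂ] H) :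
    LinearMap.ker (adjoint T : H →ₗ[ℂ] H) = ((LinearMap.range (T : H →ₗ[ℂ] H)).topologicalClosure)ᗮ := by
  have h1 : LinearMap.ker (adjoint T : H →ₗ[ℂ] H) = (LinearMap.range (T : H →ₗ[ℂ] H) : Submodule ℂ H)ᗮ := by
    ext x
    simp only [LinearMap.mem_ker, Submodule.mem_orthogonal, ContinuousLinearMap.coe_coe]
    constructor
    · rintro h u ⟨y, rfl⟩
      rw [ContinuousLinearMap.coe_coe, ← ContinuousLinearMap.adjoint_inner_right]
      simp [h]
    · intro h
      apply ext_inner_left ℂ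
      intro y
      rw [ContinuousLinearMap.adjoint_inner_right, inner_zero_right]
      exact h (T y) ⟨y, rfl⟩
  rw [h1, ← Submodule.orthogonal_orthogonal_eq_closure]
  exact le_antisymm (Submodule.le_orthogonal_orthogonal _)
    (Submodule.orthogonal_le (Submodule.le_orthogonal_orthogonal _))

omit [CompleteSpace H] in
lemma proj_congr {U V : Submodule ℂ H} [CompleteSpace U] [CompleteSpace V]
    (h : U = V) (y : H) : (Submodule.orthogonalProjectionOnto U y : H) = Submodule.orthogonalProjectionOnto V y := by
  subst h; rfl

theorem stmt7 (T : H →L[ℂ] H) :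
    haveI : CompleteSpace (LinearMap.range (T : H →ₗ[ℂ] H)).topologicalClosure :=
      (LinearMap.range (T : H →ₗ[ℂ] H)).isClosed_topologicalClosure.completeSpace_coe
    haveI : CompleteSpace (LinearMap.ker (adjoint T : H →ₗ[ℂ] H)) :=
      (ContinuousLinearMap.isClosed_ker (adjoint T)).completeSpace_coe
    (let K := (LinearMap.range (T : H →ₗ[ℂ] H)).topologicalClosure
     let M := K ⊓ (LinearMap.range (adjoint T : H →ₗ[ℂ] H)).topologicalClosure
     let A := opB T K K
     let B := opB T K (LinearMap.ker (adjoint T : H →ₗ[ℂ] H))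
     (∀ x ∈ M, T x = adjoint T x) ↔
       (∀ x : K, (x : H) ∈ M → A x = adjoint A x) ∧
         ∀ x : K, (x : H) ∈ M → adjoint B x = 0) := by
  haveI : CompleteSpace (LinearMap.range (T : H →ₗ[ℂ] H)).topologicalClosure :=
    (LinearMap.range (T : H →ₗ[ℂ] H)).isClosed_topologicalClosure.completeSpace_coe
  haveI : CompleteSpace (LinearMap.ker (adjoint T : H →ₗ[ℂ] H)) :=
    (ContinuousLinearMap.isClosed_ker (adjoint T)).completeSpace_coe
  set K := (LinearMap.range (T : H →ₗ[ℂ] H)).topologicalClosure with hK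
  set N := LinearMap.ker (adjoint T : H →ₗ[ℂ] H) with hN
  have hNK : N = Kᗮ := ker_adj_eq T
  -- T x ∈ K for all x
  have hTmem : ∀ x : H, T x ∈ K := fun x =>
    (LinearMap.range (T : H →ₗ[ℂ] H)).le_topologicalClosure ⟨x, rfl⟩
  -- adjoint A formula
  have hadjA : adjoint (opB T K K) = (Submodule.orthogonalProjectionOnto K) ∘L (adjoint T ∘L K.subtypeL) := by
    rw [opB, adjoint_comp, adjoint_comp, Submodule.adjoint_subtypeL,
      Submodule.adjoint_orthogonalProjectionOnto, comp_assoc]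
  have hadjB : adjoint (opB T K N) = (Submodule.orthogonalProjectionOnto N) ∘L (adjoint T ∘L K.subtypeL) := by
    rw [opB, adjoint_comp, adjoint_comp, Submodule.adjoint_subtypeL,
      Submodule.adjoint_orthogonalProjectionOnto, comp_assoc]
  -- coercion of A x
  have hAx : ∀ (x : H) (hx : x ∈ K), ((opB T K K ⟨x, hx⟩ : K) : H) = T x := by
    intro x hx
    simp only [opB, comp_apply, Submodule.subtypeL_apply, Submodule.coe_subtype]
    exact Submodule.starProjection_eq_self_iff.mpr (hTmem x)
  -- decomposition
  have hdec : ∀ y : H, y = (Submodule.orthogonalProjectionOnto K y : H) + (Submodule.orthogonalProjectionOnto N y : H) := by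
    intro y
    have h0 := Submodule.starProjection_add_starProjection_orthogonal (K := K) y
    rw [proj_congr hNK y]; exact h0.symm
  constructor
  · rintro h
    constructor
    · rintro ⟨x, hx⟩ hM
      have hTT := h x hM
      apply Subtype.ext
      rw [hAx x hx, hadjA]
      simp only [comp_apply, Submodule.subtypeL_apply, Submodule.coe_subtype]
      rw [← hTT]
      exact (Submodule.starProjection_eq_self_iff.mpr (hTmem x)).symm
    · rintro ⟨x, hx⟩ hM
      have hTT := h x hM
      rw [hadjB]
      simp only [comp_apply, Submodule.subtypeL_apply]
      rw [← hTT]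
      have hmem : T x ∈ Nᗮ := by
        rw [hNK]
        exact Submodule.le_orthogonal_orthogonal K (hTmem x)
      exact Submodule.orthogonalProjectionOnto_apply_of_mem_orthogonal hmem
  · rintro ⟨h1, h2⟩ x hM
    have hx : x ∈ K := hM.1
    have e1 := h1 ⟨x, hx⟩ hM
    have e2 := h2 ⟨x, hx⟩ hM
    have eA : (Submodule.orthogonalProjectionOnto K (adjoint T x) : H) = T x := by
      have := congrArg (Subtype.val) e1
      rw [hAx x hx, hadjA] at this
      simp only [comp_apply, Submodule.subtypeL_apply, Submodule.coe_subtype] at this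
      exact this.symm
    have eB : (Submodule.orthogonalProjectionOnto N (adjoint T x) : H) = 0 := by
      rw [hadjB] at e2
      simp only [comp_apply, Submodule.subtypeL_apply] at e2
      rw [e2, Submodule.coe_zero]
    rw [hdec (adjoint T x), eA, eB, add_zero]
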